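/- The Jensen–Shannon distance is a metric on the set of probability vectors on a finite nonempty type X: for all probability vectors p, q, r on X, (i) D_JSD(p,q) ≥ 0, (ii) D_JSD(p,q) = 0 if and only if p = q, (iii) D_JSD(p,q) = D_JSD(q,p), and (iv) D_JSD(p,q) ≤ D_JSD(p,r) + D_JSD(r,q). -/

import Mathlib

open Finset Matrix

noncomputable section

/-- A probability vector on a finite type: nonnegative entries summing to 1. -/
def IsProbVec {X : Type*} [Fintype X] (p : X → ℝ) : Prop :=
  (∀ x, 0 ≤ p x) ∧ ∑ x, p x = 1

/-- Kullback–Leibler divergence, with the convention that terms with `p x = 0`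
contribute `0`. -/
noncomputable def KL {X : Type*} [Fintype X] (p q : X → ℝ) : ℝ :=
  ∑ x, if p x = 0 then 0 else p x * Real.log (p x / q x)

/-- Jensen–Shannon distance. -/
noncomputable def JSD {X : Type*} [Fintype X] (p q : X → ℝ) : ℝ :=
  Real.sqrt ((1 / 2) * KL p (fun x => (p x + q x) / 2)
    + (1 / 2) * KL q (fun x => (p x + q x) / 2))

/-- A column-stochastic matrix: nonnegative entries, every column sums to 1. -/
def IsColStoch {Y X : Type*} [Fintype Y] [Fintype X] (M : Matrix Y X ℝ) : Prop :=
  (∀ y x, 0 ≤ M y x) ∧ ∀ x, ∑ y, M y x = 1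

/-- The sup-JSD distance between two matrices of the same shape:
the maximum over columns of the JSD between corresponding columns. -/
noncomputable def supJSD {Y X : Type*} [Fintype Y] [Fintype X] [Nonempty X]
    (M N : Matrix Y X ℝ) : ℝ :=
  Finset.univ.sup' Finset.univ_nonempty fun x => JSD (fun y => M y x) (fun y => N y x)

/-- An abstraction matrix: entries in {0,1}, every column contains exactly one 1,
and every row contains at least one 1. -/
def IsAbsMatrix {N M : Type*} [Fintype N] [Fintype M] (α : Matrix N M ℝ) : Prop :=
  (∀ j i, α j i = 0 ∨ α j i = 1) ∧ (∀ i, ∃! j, α j i = 1) ∧ (∀ j, ∃ i, α j i = 1)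

/-- The pseudo-inverse `α⁺ = αᵀ·(α·αᵀ)⁻¹` of an abstraction matrix. -/
noncomputable def pinv {N M : Type*} [Fintype N] [Fintype M] [DecidableEq N]
    (α : Matrix N M ℝ) : Matrix M N ℝ :=
  αᵀ * (α * αᵀ)⁻¹


open Real

namespace JSDaux

noncomputable def f (a b : ℝ) : ℝ :=
  (1/2) * (if a = 0 then 0 else a * Real.log (a / ((a+b)/2)))
  + (1/2) * (if b = 0 then 0 else b * Real.log (b / ((a+b)/2)))

lemma f_symm (a b : ℝ) : f a b = f b a := by
  unfold f; rw [add_comm b a]; exact add_comm _ _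

lemma f_self (a : ℝ) : f a a = 0 := by
  unfold f
  rcases eq_or_ne a 0 with h | h
  · simp [h]
  · rw [if_neg h, show (a+a)/2 = a by ring, div_self h, Real.log_one]; ring

lemma f_eq {a b : ℝ} (ha : a ≠ 0) (hb : b ≠ 0) :
    f a b = (1/2) * (a * Real.log (2*a/(a+b))) + (1/2) * (b * Real.log (2*b/(a+b))) := by
  unfold f
  rw [if_neg ha, if_neg hb, show a / ((a+b)/2) = 2*a/(a+b) by
        rw [div_div_eq_mul_div, mul_comm],
      show b / ((a+b)/2) = 2*b/(a+b) by rw [div_div_eq_mul_div, mul_comm]]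

lemma f_pos {a b : ℝ} (ha : 0 ≤ a) (hb : 0 ≤ b) (hne : a ≠ b) : 0 < f a b := by
  rcases ha.eq_or_lt with h0 | ha'
  · -- a = 0, so b > 0
    have hb' : 0 < b := lt_of_le_of_ne hb (by rw [← h0] at hne; exact Ne.symm hne ∘ Eq.symm)
    subst h0
    unfold f
    rw [if_pos rfl, if_neg hb'.ne', show b / ((0+b)/2) = 2 by field_simp; ring]
    have := Real.log_pos (by norm_num : (1:ℝ) < 2)
    positivity
  rcases hb.eq_or_lt with h0 | hb'
  · subst h0
    unfold f
    rw [if_pos rfl, if_neg ha'.ne', show a / ((a+0)/2) = 2 by field_simp; ring]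
    have := Real.log_pos (by norm_num : (1:ℝ) < 2)
    positivity
  -- both positive
  have hm : 0 < (a+b)/2 := by positivity
  rw [f_eq ha'.ne' hb'.ne']
  have key : ∀ x : ℝ, 0 < x → x ≠ (a+b)/2 → x - (a+b)/2 < x * Real.log (2*x/(a+b)) := by
    intro x hx hxm
    have h1 : Real.log ((a+b)/2 / x) < (a+b)/2/x - 1 :=
      Real.log_lt_sub_one_of_pos (by positivity) (by
        intro h; apply hxm; field_simp at h; linarith)
    have h2 : Real.log (2*x/(a+b)) = - Real.log ((a+b)/2/x) := by
      rw [← Real.log_inv]; congr 1; field_simp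
    rw [h2]
    have := (mul_lt_mul_iff_right₀ hx).mpr h1
    have hx' : x * ((a+b)/2/x - 1) = (a+b)/2 - x := by field_simp
    nlinarith
  have keyle : ∀ x : ℝ, 0 < x → x - (a+b)/2 ≤ x * Real.log (2*x/(a+b)) := by
    intro x hx
    rcases eq_or_ne x ((a+b)/2) with h | h
    · rw [show 2*x/(a+b) = 1 by rw [h]; field_simp, Real.log_one, mul_zero]; linarith [h]
    · exact (key x hx h).le
  have hane : a ≠ (a+b)/2 := by intro h; apply hne; linarith [h]
  have h1 := key a ha' hane
  have h2 := keyle b hb'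
  nlinarith

lemma f_nonneg {a b : ℝ} (ha : 0 ≤ a) (hb : 0 ≤ b) : 0 ≤ f a b := by
  rcases eq_or_ne a b with h | h
  · subst h; rw [f_self]
  · exact (f_pos ha hb h).le

lemma mul_log_ge {x : ℝ} (hx : 0 < x) : x - 1 ≤ x * Real.log x := by
  have h := Real.log_le_sub_one_of_pos (inv_pos.mpr hx)
  rw [Real.log_inv] at h
  have := (mul_le_mul_iff_right₀ hx).mpr h
  have hx' : x * (x⁻¹ - 1) = 1 - x := by field_simp
  nlinarith

lemma B_lemma {u : ℝ} (h0 : 0 < u) (h2 : u < 2) :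
    0 ≤ u * Real.log u + (2-u) * Real.log (2-u) := by
  have h1 := mul_log_ge h0
  have h3 := mul_log_ge (by linarith : (0:ℝ) < 2 - u)
  linarith

lemma G_deriv {x : ℝ} (h0 : 0 < x) (h1 : x < 2) :
    HasDerivAt (fun u => u * Real.log u + (2-u) * Real.log (2-u)
        + Real.log u * Real.log (2-u))
      (Real.log x - Real.log (2-x) + (Real.log (2-x) / x - Real.log x / (2-x))) x := by
  have hx : x ≠ 0 := h0.ne'
  have h2x : (2:ℝ) - x ≠ 0 := by intro h; linarith [h]
  have d1 : HasDerivAt (fun u : ℝ => u * Real.log u) (Real.log x + 1) x := by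
    have := (hasDerivAt_id x).mul (Real.hasDerivAt_log hx)
    refine this.congr_deriv ?_
    field_simp
    simp only [id_eq]
    ring
  have dsub : HasDerivAt (fun u : ℝ => 2 - u) (-1 : ℝ) x := by
    simpa using (hasDerivAt_const x (2:ℝ)).fun_sub (hasDerivAt_id' x)
  have dlog2 : HasDerivAt (fun u : ℝ => Real.log (2 - u)) (-(2-x)⁻¹) x := by
    have := dsub.log h2x
    convert this using 1
    field_simp
  have d2 : HasDerivAt (fun u : ℝ => (2-u) * Real.log (2-u))
      (-Real.log (2-x) - 1) x := by
    have := dsub.fun_mul dlog2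
    refine this.congr_deriv ?_
    field_simp
    ring
  have d3 : HasDerivAt (fun u : ℝ => Real.log u * Real.log (2-u))
      (Real.log (2-x) / x - Real.log x / (2-x)) x := by
    have := (Real.hasDerivAt_log hx).fun_mul dlog2
    refine this.congr_deriv ?_
    field_simp
    ring
  have := (d1.fun_add d2).fun_add d3
  refine this.congr_deriv ?_
  ring

lemma G_nonpos {u : ℝ} (h0 : 0 < u) (h1 : u ≤ 1) :
    u * Real.log u + (2-u) * Real.log (2-u) + Real.log u * Real.log (2-u) ≤ 0 := by
  set G : ℝ → ℝ := fun u => u * Real.log u + (2-u) * Real.log (2-u)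
      + Real.log u * Real.log (2-u) with hG
  have hmono : MonotoneOn G (Set.Ioc (0:ℝ) 1) := by
    apply monotoneOn_of_deriv_nonneg (convex_Ioc 0 1)
    · intro x hx
      have hx0 : x ≠ 0 := (hx.1).ne'
      have hx2 : (2:ℝ) - x ≠ 0 := by intro h; nlinarith [hx.2]
      exact ((G_deriv hx.1 (by nlinarith [hx.2])).continuousAt).continuousWithinAt
    · intro x hx
      rw [interior_Ioc] at hx
      exact ((G_deriv hx.1 (by nlinarith [hx.2])).differentiableAt).differentiableWithinAt
    · intro x hx
      rw [interior_Ioc] at hx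
      obtain ⟨hx0, hx1⟩ := hx
      rw [(G_deriv hx0 (by linarith)).deriv]
      have hx2 : (0:ℝ) < 2 - x := by linarith
      have hBx := B_lemma hx0 (by linarith : x < 2)
      have key : Real.log x - Real.log (2-x) + (Real.log (2-x) / x - Real.log x / (2-x))
          = (1-x) * ((x * Real.log x + (2-x) * Real.log (2-x)) / (x * (2-x))) := by
        field_simp
        ring
      rw [key]
      have : 0 ≤ (x * Real.log x + (2-x) * Real.log (2-x)) / (x * (2-x)) :=
        div_nonneg hBx (by positivity)
      exact mul_nonneg (by linarith) this
  have h1mem : (1:ℝ) ∈ Set.Ioc (0:ℝ) 1 := by norm_num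
  have humem : u ∈ Set.Ioc (0:ℝ) 1 := ⟨h0, h1⟩
  have := hmono humem h1mem h1
  simp only [hG] at this
  norm_num [Real.log_one] at this
  exact this

/-- derivative of `f a ·` at `b > 0`, for `a ≥ 0`. -/
lemma hasDerivAt_f (a : ℝ) (ha : 0 ≤ a) {b : ℝ} (hb : 0 < b) :
    HasDerivAt (fun y =>
        (1/2) * (if a = 0 then 0 else a * Real.log (a / ((a+y)/2)))
        + (1/2) * (if y = 0 then 0 else y * Real.log (y / ((a+y)/2))))
      ((1/2) * Real.log (2*b/(a+b))) b := by
  rcases ha.eq_or_lt with h0 | ha'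
  · subst h0
    have hev : ∀ᶠ y in nhds b, ((1/2) * (if (0:ℝ) = 0 then (0:ℝ) else 0 * Real.log (0 / ((0+y)/2)))
        + (1/2) * (if y = 0 then 0 else y * Real.log (y / ((0+y)/2))))
        = (1/2) * Real.log 2 * y := by
      filter_upwards [eventually_gt_nhds hb] with y hy
      rw [if_pos rfl, if_neg hy.ne', show y / ((0+y)/2) = 2 by field_simp; ring]
      ring
    have hd : HasDerivAt (fun y : ℝ => (1/2) * Real.log 2 * y) ((1/2) * Real.log 2) b := by
      simpa using (hasDerivAt_id b).const_mul ((1/2) * Real.log 2)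
    have := hd.congr_of_eventuallyEq hev
    refine this.congr_deriv ?_
    rw [show 2*b/(0+b) = 2 by field_simp; ring]
  · -- a > 0
    have ham : ∀ y : ℝ, 0 < y → (0:ℝ) < (a+y)/2 := fun y hy => by positivity
    have hev : ∀ᶠ y in nhds b, ((1/2) * (if a = 0 then (0:ℝ) else a * Real.log (a / ((a+y)/2)))
        + (1/2) * (if y = 0 then 0 else y * Real.log (y / ((a+y)/2))))
        = (1/2) * (a * (Real.log a - Real.log ((a+y)/2)))
          + (1/2) * (y * (Real.log y - Real.log ((a+y)/2))) := by
      filter_upwards [eventually_gt_nhds hb] with y hy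
      rw [if_neg ha'.ne', if_neg hy.ne',
        Real.log_div ha'.ne' (ham y hy).ne', Real.log_div hy.ne' (ham y hy).ne']
    have hm : (0:ℝ) < (a+b)/2 := by positivity
    have dm : HasDerivAt (fun y : ℝ => (a+y)/2) (1/2 : ℝ) b := by
      simpa using (((hasDerivAt_id b).const_add a).div_const 2)
    have dlogm : HasDerivAt (fun y : ℝ => Real.log ((a+y)/2)) ((a+b)⁻¹) b := by
      have := dm.log hm.ne'
      convert this using 1
      field_simp
    have d1 : HasDerivAt (fun y : ℝ => (1/2) * (a * (Real.log a - Real.log ((a+y)/2))))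
        ((1/2) * (a * (0 - (a+b)⁻¹))) b :=
      (((hasDerivAt_const b (Real.log a)).sub dlogm).const_mul a).const_mul (1/2)
    have d2 : HasDerivAt (fun y : ℝ => (1/2) * (y * (Real.log y - Real.log ((a+y)/2))))
        ((1/2) * (1 * (Real.log b - Real.log ((a+b)/2)) + b * (b⁻¹ - (a+b)⁻¹))) b :=
      ((hasDerivAt_id b).mul ((Real.hasDerivAt_log hb.ne').sub dlogm)).const_mul (1/2)
    have := (d1.add d2).congr_of_eventuallyEq hev
    refine this.congr_deriv ?_
    have e1 : Real.log ((a+b)/2) = Real.log (a+b) - Real.log 2 :=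
      Real.log_div (by positivity) two_ne_zero
    have e2 : Real.log (2*b/(a+b)) = Real.log 2 + Real.log b - Real.log (a+b) := by
      rw [Real.log_div (by positivity) (by positivity), Real.log_mul two_ne_zero hb.ne']
    rw [e1, e2]
    field_simp
    ring



lemma hasDerivAt_f2 (a : ℝ) (ha : 0 ≤ a) {b : ℝ} (hb : 0 < b) :
    HasDerivAt (fun y => f a y) ((1/2) * Real.log (2*b/(a+b))) b := by
  unfold f; exact hasDerivAt_f a ha hb

lemma hasDerivAt_f1 (b : ℝ) (hb : 0 ≤ b) {x : ℝ} (hx : 0 < x) :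
    HasDerivAt (fun y => f y b) ((1/2) * Real.log (2*x/(b+x))) x := by
  have h : (fun y => f y b) = fun y => f b y := funext fun y => f_symm y b
  rw [h]; exact hasDerivAt_f2 b hb hx

lemma contOn_f1 {b : ℝ} (hb : 0 < b) {s : Set ℝ} (hs : s ⊆ Set.Ici 0) :
    ContinuousOn (fun x => f x b) s := by
  have hbase : ContinuousOn (fun x => (x * Real.log x - x * Real.log ((x+b)/2)) / 2
      + (1/2) * (b * Real.log (b / ((x+b)/2)))) s := by
    intro x hx
    have hx0 : (0:ℝ) ≤ x := hs hx
    have hxb : (0:ℝ) < (x+b)/2 := by positivity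
    have c1 : ContinuousAt (fun x : ℝ => x * Real.log x) x :=
      Real.continuous_mul_log.continuousAt
    have c2 : ContinuousAt (fun x : ℝ => x * Real.log ((x+b)/2)) x :=
      continuousAt_id.mul (ContinuousAt.log (by fun_prop) hxb.ne')
    have c3 : ContinuousAt (fun x : ℝ => Real.log (b / ((x+b)/2))) x :=
      ContinuousAt.log (ContinuousAt.div continuousAt_const (by fun_prop) hxb.ne')
        (by positivity)
    exact (((c1.sub c2).div_const 2).add
      (continuousAt_const.mul (continuousAt_const.mul c3))).continuousWithinAt
  apply hbase.congr
  intro x hx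
  have hx0 : (0:ℝ) ≤ x := hs hx
  have hxb : (0:ℝ) < (x+b)/2 := by positivity
  show f x b = _
  unfold f
  rcases eq_or_ne x 0 with h | h
  · subst h; rw [if_pos rfl, if_neg hb.ne']; ring
  · rw [if_neg h, if_neg hb.ne', Real.log_div h hxb.ne']
    ring

lemma f_right_mono {a b c : ℝ} (ha : 0 ≤ a) (hab : a ≤ b) (hbc : b ≤ c) :
    f a b ≤ f a c := by
  rcases (ha.trans hab).eq_or_lt with h0 | hb
  · have ha0 : a = 0 := le_antisymm (hab.trans h0.symm.le) ha
    have hb0 : b = 0 := h0.symm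
    subst ha0; subst hb0
    rw [f_self]
    exact f_nonneg le_rfl (by linarith)
  · have hmono : MonotoneOn (fun y => f a y) (Set.Icc b c) := by
      apply monotoneOn_of_deriv_nonneg (convex_Icc b c)
      · intro y hy
        exact (hasDerivAt_f2 a ha (lt_of_lt_of_le hb hy.1)).continuousAt.continuousWithinAt
      · intro y hy
        rw [interior_Icc] at hy
        exact (hasDerivAt_f2 a ha (hb.trans hy.1)).differentiableAt.differentiableWithinAt
      · intro y hy
        rw [interior_Icc] at hy
        have hy0 : 0 < y := hb.trans hy.1
        rw [(hasDerivAt_f2 a ha hy0).deriv]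
        have : (1:ℝ) ≤ 2*y/(a+y) := by
          rw [le_div_iff₀ (by positivity)]; linarith [hab.trans_lt hy.1]
        have := Real.log_nonneg this
        positivity
    exact hmono (Set.left_mem_Icc.mpr hbc) (Set.right_mem_Icc.mpr hbc) hbc

lemma f_left_anti {c a b : ℝ} (hc : 0 ≤ c) (hca : c ≤ a) (hab : a ≤ b) :
    f a b ≤ f c b := by
  rcases (hc.trans hca).eq_or_lt with h0 | ha'
  · have hc0 : c = 0 := le_antisymm (hca.trans h0.symm.le) hc
    rw [← h0, hc0]
  · have hb : 0 < b := ha'.trans_le hab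
    have hanti : AntitoneOn (fun x => f x b) (Set.Icc c a) := by
      apply antitoneOn_of_deriv_nonpos (convex_Icc c a)
      · exact contOn_f1 hb (fun x hx => hc.trans hx.1)
      · intro x hx
        rw [interior_Icc] at hx
        have hx0 : 0 < x := lt_of_le_of_lt hc hx.1
        exact (hasDerivAt_f1 b hb.le hx0).differentiableAt.differentiableWithinAt
      · intro x hx
        rw [interior_Icc] at hx
        have hx0 : 0 < x := lt_of_le_of_lt hc hx.1
        rw [(hasDerivAt_f1 b hb.le hx0).deriv]
        have h1 : 2*x/(b+x) ≤ 1 := by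
          rw [div_le_one (by positivity)]; linarith [hx.2.trans_le hab]
        have hlog : Real.log (2*x/(b+x)) ≤ 0 := Real.log_nonpos (by positivity) h1
        linarith [mul_le_mul_of_nonneg_left hlog (show (0:ℝ) ≤ 1/2 by norm_num)]
    exact hanti (Set.left_mem_Icc.mpr hca) (Set.right_mem_Icc.mpr hca) hca

lemma key_ineq {a c b : ℝ} (ha : 0 ≤ a) (hac : a < c) (hcb : c < b) :
    Real.log (2*b/(a+b)) * Real.sqrt (f c b) ≤ Real.log (2*b/(c+b)) * Real.sqrt (f a b) := by
  have hc : 0 < c := lt_of_le_of_lt ha hac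
  have hb : 0 < b := hc.trans hcb
  have hLpos : ∀ x : ℝ, 0 ≤ x → x < b → 0 < Real.log (2*b/(x+b)) := by
    intro x hx0 hxb
    apply Real.log_pos
    rw [lt_div_iff₀ (by positivity)]; linarith
  have hanti : AntitoneOn (fun x => f x b / (Real.log (2*b/(x+b)))^2) (Set.Icc a c) := by
    apply antitoneOn_of_deriv_nonpos (convex_Icc a c)
    · apply ContinuousOn.div (contOn_f1 hb (fun x hx => ha.trans hx.1))
      · apply ContinuousOn.pow
        intro x hx
        apply ContinuousAt.continuousWithinAt
        apply ContinuousAt.log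
        · exact ContinuousAt.div continuousAt_const (by fun_prop)
            (by have := ha.trans hx.1; positivity)
        · have h1 : (0:ℝ) < 2*b/(x+b) := by have := ha.trans hx.1; positivity
          exact h1.ne'
      · intro x hx
        exact pow_ne_zero 2 (hLpos x (ha.trans hx.1) (lt_of_le_of_lt hx.2 hcb)).ne'
    · intro x hx
      rw [interior_Icc] at hx
      have hx0 : 0 < x := lt_of_le_of_lt ha hx.1
      have hxb : x < b := hx.2.trans hcb
      have hdf := hasDerivAt_f1 b hb.le hx0
      have hdL : HasDerivAt (fun x : ℝ => Real.log (2*b/(x+b))) (-(1/(x+b))) x := by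
        have h1 : (0:ℝ) < x + b := by positivity
        have := ((hasDerivAt_const x (2*b)).fun_div ((hasDerivAt_id' x).add_const b)
          h1.ne').log (by positivity)
        refine this.congr_deriv ?_
        field_simp
        ring
      exact (hdf.div (hdL.pow 2) (pow_ne_zero 2 (hLpos x hx0.le hxb).ne')).differentiableAt.differentiableWithinAt
    · intro x hx
      rw [interior_Icc] at hx
      have hx0 : 0 < x := lt_of_le_of_lt ha hx.1
      have hxb : x < b := hx.2.trans hcb
      have hxbpos : (0:ℝ) < x + b := by positivity
      have hdf := hasDerivAt_f1 b hb.le hx0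
      have hdL : HasDerivAt (fun x : ℝ => Real.log (2*b/(x+b))) (-(1/(x+b))) x := by
        have := ((hasDerivAt_const x (2*b)).fun_div ((hasDerivAt_id' x).add_const b)
          hxbpos.ne').log (by positivity)
        refine this.congr_deriv ?_
        field_simp
        ring
      have hLx : 0 < Real.log (2*b/(x+b)) := hLpos x hx0.le hxb
      have hdR := hdf.fun_div (hdL.fun_pow 2) (pow_ne_zero 2 hLx.ne')
      rw [hdR.deriv]
      apply div_nonpos_of_nonpos_of_nonneg _ (by positivity)
      -- numerator ≤ 0
      have hu0 : (0:ℝ) < 2*x/(x+b) := by positivity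
      have hu1 : 2*x/(x+b) < 1 := by rw [div_lt_one hxbpos]; linarith
      have hG := G_nonpos hu0 hu1.le
      rw [show (2:ℝ) - 2*x/(x+b) = 2*b/(x+b) by field_simp; ring] at hG
      have h2 : x * Real.log (2*x/(x+b)) + b * Real.log (2*b/(x+b))
          + ((x+b)/2) * (Real.log (2*x/(x+b)) * Real.log (2*b/(x+b))) ≤ 0 := by
        have heq : x * Real.log (2*x/(x+b)) + b * Real.log (2*b/(x+b))
            + ((x+b)/2) * (Real.log (2*x/(x+b)) * Real.log (2*b/(x+b)))
            = ((x+b)/2) * ((2*x/(x+b)) * Real.log (2*x/(x+b))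
              + (2*b/(x+b)) * Real.log (2*b/(x+b))
              + Real.log (2*x/(x+b)) * Real.log (2*b/(x+b))) := by
          field_simp
        rw [heq]
        exact mul_nonpos_of_nonneg_of_nonpos (by positivity) hG
      have h3 := mul_nonpos_of_nonneg_of_nonpos (div_nonneg hLx.le hxbpos.le) h2
      refine le_of_eq_of_le ?_ h3
      rw [f_eq hx0.ne' hb.ne', show b + x = x + b from add_comm b x]
      push_cast
      norm_num
      field_simp
      ring
  have hRca := hanti (Set.left_mem_Icc.mpr hac.le) (Set.right_mem_Icc.mpr hac.le) hac.le
  have hLa : 0 < Real.log (2*b/(a+b)) := hLpos a ha (hac.trans hcb)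
  have hLc : 0 < Real.log (2*b/(c+b)) := hLpos c hc.le hcb
  have hcross : f c b * (Real.log (2*b/(a+b)))^2 ≤ f a b * (Real.log (2*b/(c+b)))^2 := by
    rw [div_le_div_iff₀ (by positivity) (by positivity)] at hRca
    exact hRca
  calc Real.log (2*b/(a+b)) * Real.sqrt (f c b)
      = Real.sqrt ((Real.log (2*b/(a+b)))^2 * f c b) := by
        rw [Real.sqrt_mul (sq_nonneg _), Real.sqrt_sq hLa.le]
    _ ≤ Real.sqrt ((Real.log (2*b/(c+b)))^2 * f a b) :=
        Real.sqrt_le_sqrt (by nlinarith [hcross])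
    _ = Real.log (2*b/(c+b)) * Real.sqrt (f a b) := by
        rw [Real.sqrt_mul (sq_nonneg _), Real.sqrt_sq hLc.le]

lemma sqrt_tri_le {a b c : ℝ} (ha : 0 ≤ a) (hb : 0 ≤ b) (hc : 0 ≤ c) (hab : a ≤ b) :
    Real.sqrt (f a b) ≤ Real.sqrt (f a c) + Real.sqrt (f c b) := by
  rcases le_or_gt c a with h | h
  · have h1 := Real.sqrt_le_sqrt (f_left_anti hc h hab)
    linarith [Real.sqrt_nonneg (f a c)]
  rcases le_or_gt b c with h' | h'
  · have h1 := Real.sqrt_le_sqrt (f_right_mono ha hab h')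
    linarith [Real.sqrt_nonneg (f c b)]
  · -- a < c < b
    have hc0 : 0 < c := lt_of_le_of_lt ha h
    have hanti : AntitoneOn (fun y => Real.sqrt (f a y) - Real.sqrt (f c y))
        (Set.Icc c b) := by
      apply antitoneOn_of_deriv_nonpos (convex_Icc c b)
      · intro y hy
        have hy0 : 0 < y := lt_of_lt_of_le hc0 hy.1
        exact (((hasDerivAt_f2 a ha hy0).continuousAt.sqrt).sub
          ((hasDerivAt_f2 c hc0.le hy0).continuousAt.sqrt)).continuousWithinAt
      · intro y hy
        rw [interior_Icc] at hy
        have hy0 : 0 < y := hc0.trans hy.1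
        have hfa : f a y ≠ 0 := (f_pos ha hy0.le (by linarith [h.trans hy.1] : a ≠ y)).ne'
        have hfc : f c y ≠ 0 := (f_pos hc0.le hy0.le hy.1.ne).ne'
        exact (((hasDerivAt_f2 a ha hy0).sqrt hfa).sub
          ((hasDerivAt_f2 c hc0.le hy0).sqrt hfc)).differentiableAt.differentiableWithinAt
      · intro y hy
        rw [interior_Icc] at hy
        have hy0 : 0 < y := hc0.trans hy.1
        have hfa : 0 < f a y := f_pos ha hy0.le (by linarith [h.trans hy.1] : a ≠ y)
        have hfc : 0 < f c y := f_pos hc0.le hy0.le hy.1.ne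
        rw [(((hasDerivAt_f2 a ha hy0).sqrt hfa.ne').fun_sub
          ((hasDerivAt_f2 c hc0.le hy0).sqrt hfc.ne')).deriv]
        rw [sub_nonpos]
        have hk := key_ineq ha h hy.1
        have hsa : 0 < Real.sqrt (f a y) := Real.sqrt_pos.mpr hfa
        have hsc : 0 < Real.sqrt (f c y) := Real.sqrt_pos.mpr hfc
        rw [div_le_div_iff₀ (by positivity) (by positivity)]
        nlinarith [hk]
    have := hanti (Set.left_mem_Icc.mpr h'.le) (Set.right_mem_Icc.mpr h'.le) h'.le
    simp only [f_self, Real.sqrt_zero, sub_zero] at this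
    linarith

lemma sqrt_tri {a b c : ℝ} (ha : 0 ≤ a) (hb : 0 ≤ b) (hc : 0 ≤ c) :
    Real.sqrt (f a b) ≤ Real.sqrt (f a c) + Real.sqrt (f c b) := by
  rcases le_total a b with h | h
  · exact sqrt_tri_le ha hb hc h
  · have := sqrt_tri_le hb ha hc h
    rw [f_symm a b, f_symm a c, f_symm c b]
    linarith

end JSDaux

lemma jsd_eq {X : Type*} [Fintype X] (p q : X → ℝ) :
    JSD p q = Real.sqrt (∑ x, JSDaux.f (p x) (q x)) := by
  unfold JSD KL JSDaux.f
  congr 1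
  rw [Finset.mul_sum, Finset.mul_sum, ← Finset.sum_add_distrib]

theorem jsd_is_metric {X : Type*} [Fintype X] [Nonempty X]
    (p q r : X → ℝ) (hp : IsProbVec p) (hq : IsProbVec q) (hr : IsProbVec r) :
    0 ≤ JSD p q ∧ (JSD p q = 0 ↔ p = q) ∧ JSD p q = JSD q p ∧
      JSD p q ≤ JSD p r + JSD r q := by
  obtain ⟨hp0, -⟩ := hp
  obtain ⟨hq0, -⟩ := hq
  obtain ⟨hr0, -⟩ := hr
  have hfnn : ∀ x, 0 ≤ JSDaux.f (p x) (q x) := fun x => JSDaux.f_nonneg (hp0 x) (hq0 x)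
  refine ⟨Real.sqrt_nonneg _, ?_, ?_, ?_⟩
  · rw [jsd_eq, Real.sqrt_eq_zero (Finset.sum_nonneg fun x _ => hfnn x),
      Finset.sum_eq_zero_iff_of_nonneg (fun x _ => hfnn x)]
    constructor
    · intro h
      funext x
      by_contra hne
      exact (JSDaux.f_pos (hp0 x) (hq0 x) hne).ne' (h x (Finset.mem_univ x))
    · intro h x _
      rw [h, JSDaux.f_self]
  · rw [jsd_eq, jsd_eq]
    congr 1
    exact Finset.sum_congr rfl fun x _ => JSDaux.f_symm _ _
  · rw [jsd_eq, jsd_eq, jsd_eq]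
    set u := fun x => Real.sqrt (JSDaux.f (p x) (r x)) with hu
    set v := fun x => Real.sqrt (JSDaux.f (r x) (q x)) with hv
    have hA : ∑ x, u x ^ 2 = ∑ x, JSDaux.f (p x) (r x) :=
      Finset.sum_congr rfl fun x _ => Real.sq_sqrt (JSDaux.f_nonneg (hp0 x) (hr0 x))
    have hB : ∑ x, v x ^ 2 = ∑ x, JSDaux.f (r x) (q x) :=
      Finset.sum_congr rfl fun x _ => Real.sq_sqrt (JSDaux.f_nonneg (hr0 x) (hq0 x))
    have h1 : ∑ x, JSDaux.f (p x) (q x) ≤ ∑ x, (u x + v x) ^ 2 := by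
      apply Finset.sum_le_sum
      intro x _
      have ht := JSDaux.sqrt_tri (hp0 x) (hq0 x) (hr0 x)
      calc JSDaux.f (p x) (q x) = Real.sqrt (JSDaux.f (p x) (q x)) ^ 2 :=
            (Real.sq_sqrt (hfnn x)).symm
        _ ≤ (u x + v x) ^ 2 := by
            apply pow_le_pow_left₀ (Real.sqrt_nonneg _) ht
    have hCS : ∑ x, u x * v x ≤
        Real.sqrt (∑ x, JSDaux.f (p x) (r x)) * Real.sqrt (∑ x, JSDaux.f (r x) (q x)) := by
      have h := Finset.sum_mul_sq_le_sq_mul_sq Finset.univ u v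
      have hnn : 0 ≤ ∑ x, u x * v x :=
        Finset.sum_nonneg fun x _ => mul_nonneg (Real.sqrt_nonneg _) (Real.sqrt_nonneg _)
      calc ∑ x, u x * v x = Real.sqrt ((∑ x, u x * v x) ^ 2) := (Real.sqrt_sq hnn).symm
        _ ≤ Real.sqrt ((∑ x, u x ^ 2) * ∑ x, v x ^ 2) := Real.sqrt_le_sqrt h
        _ = Real.sqrt (∑ x, u x ^ 2) * Real.sqrt (∑ x, v x ^ 2) :=
            Real.sqrt_mul (Finset.sum_nonneg fun x _ => sq_nonneg _) _
        _ = _ := by rw [hA, hB]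
    have h2 : ∑ x, (u x + v x) ^ 2
        ≤ (Real.sqrt (∑ x, JSDaux.f (p x) (r x))
            + Real.sqrt (∑ x, JSDaux.f (r x) (q x))) ^ 2 := by
      have e : ∑ x, (u x + v x) ^ 2
          = ∑ x, u x ^ 2 + 2 * (∑ x, u x * v x) + ∑ x, v x ^ 2 := by
        rw [Finset.mul_sum, ← Finset.sum_add_distrib, ← Finset.sum_add_distrib]
        exact Finset.sum_congr rfl fun x _ => by ring
      have sqA : Real.sqrt (∑ x, JSDaux.f (p x) (r x)) ^ 2 = ∑ x, JSDaux.f (p x) (r x) :=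
        Real.sq_sqrt (Finset.sum_nonneg fun x _ => JSDaux.f_nonneg (hp0 x) (hr0 x))
      have sqB : Real.sqrt (∑ x, JSDaux.f (r x) (q x)) ^ 2 = ∑ x, JSDaux.f (r x) (q x) :=
        Real.sq_sqrt (Finset.sum_nonneg fun x _ => JSDaux.f_nonneg (hr0 x) (hq0 x))
      rw [e, add_sq, sqA, sqB, ← hA, ← hB]
      have := hCS
      rw [← hA, ← hB] at this
      nlinarith [this]
    calc Real.sqrt (∑ x, JSDaux.f (p x) (q x))
        ≤ Real.sqrt ((Real.sqrt (∑ x, JSDaux.f (p x) (r x))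
            + Real.sqrt (∑ x, JSDaux.f (r x) (q x))) ^ 2) :=
          Real.sqrt_le_sqrt (h1.trans h2)
      _ = _ := Real.sqrt_sq (by positivity)
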